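/- If a partition of a sequence into consecutive blocks has the property that each block requests at most k' distinct items, then each k'-phase of the sequence contains the final element of at least one block; hence the number of k'-phases is at most the number of blocks. -/

import Mathlib

/-- Length of the maximal prefix of `r` containing at most `k` distinct items. -/
def maxPrefixLen {α : Type*} [DecidableEq α] (k : ℕ) (r : List α) : ℕ :=
  ((List.range (r.length + 1)).filter (fun n => (r.take n).dedup.length ≤ k)).foldr max 0

/-- Greedy phase partition, with fuel for termination. -/
def phasesAux {α : Type*} [DecidableEq α] (k : ℕ) : ℕ → List α → List (List α)
  | 0, _ => []
  | _, [] => []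
  | (fuel+1), r =>
      let n := max 1 (maxPrefixLen k r)
      r.take n :: phasesAux k fuel (r.drop n)

/-- The `k`-phase partition of `r`: greedy maximal consecutive blocks, each
containing requests to at most `k` distinct items. -/
def phases {α : Type*} [DecidableEq α] (k : ℕ) (r : List α) : List (List α) :=
  phasesAux k r.length r

/-- `L(k,r)`: the number of `k`-phases of `r`, minus 1. -/
def numPhases {α : Type*} [DecidableEq α] (k : ℕ) (r : List α) : ℕ :=
  (phases k r).length - 1

/-- For each `k`-phase other than the first, the number of new requests:
items requested in the phase but not in the previous phase. -/
def newCounts {α : Type*} [DecidableEq α] (k : ℕ) (r : List α) : List ℕ :=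
  ((phases k r).zip (phases k r).tail).map
    (fun p => (p.2.dedup.filter (fun x => x ∉ p.1)).length)

/-- `m(k,r)`: the average number of new requests per `k`-phase (other than the first). -/
noncomputable def avgNew {α : Type*} [DecidableEq α] (k : ℕ) (r : List α) : ℝ :=
  ((newCounts k r).sum : ℝ) / (numPhases k r : ℝ)

/-- Index in `r` at which the `i`-th `k`-phase starts. -/
def phaseStart {α : Type*} [DecidableEq α] (k : ℕ) (r : List α) (i : ℕ) : ℕ :=
  (((phases k r).take i).map List.length).sum

-- foldr max lemmas
lemma le_foldr_max (l : List ℕ) (a : ℕ) (h : a ∈ l) : a ≤ l.foldr max 0 := by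
  induction l with
  | nil => simp at h
  | cons x xs ih =>
    rcases List.mem_cons.1 h with rfl | h
    · exact le_max_left _ _
    · exact le_trans (ih h) (le_max_right _ _)

lemma foldr_max_le (l : List ℕ) (m : ℕ) (h : ∀ a ∈ l, a ≤ m) : l.foldr max 0 ≤ m := by
  induction l with
  | nil => simp
  | cons x xs ih =>
    simp only [List.foldr_cons, max_le_iff]
    exact ⟨h x (by simp), ih fun a ha => h a (by simp [ha])⟩

lemma le_maxPrefixLen {α : Type*} [DecidableEq α] {k n : ℕ} {r : List α}
    (h1 : n ≤ r.length) (h2 : (r.take n).dedup.length ≤ k) : n ≤ maxPrefixLen k r := by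
  apply le_foldr_max
  simp only [List.mem_filter, List.mem_range, decide_eq_true_eq]
  exact ⟨Nat.lt_succ_of_le h1, h2⟩

lemma maxPrefixLen_le {α : Type*} [DecidableEq α] (k : ℕ) (r : List α) :
    maxPrefixLen k r ≤ r.length := by
  apply foldr_max_le
  intro a ha
  simp only [List.mem_filter, List.mem_range] at ha
  omega

lemma phasesAux_nil {α : Type*} [DecidableEq α] (k fuel : ℕ) :
    phasesAux (α := α) k fuel [] = [] := by
  cases fuel <;> rfl

lemma phasesAux_congr {α : Type*} [DecidableEq α] (k : ℕ) :
    ∀ f₁ f₂ (r : List α), r.length ≤ f₁ → r.length ≤ f₂ →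
      phasesAux k f₁ r = phasesAux k f₂ r := by
  intro f₁
  induction f₁ with
  | zero =>
    intro f₂ r h1 _
    rw [List.length_eq_zero_iff.1 (Nat.le_zero.1 h1)]
    simp [phasesAux_nil]
  | succ f ih =>
    intro f₂ r h1 h2
    cases r with
    | nil => simp [phasesAux_nil]
    | cons x xs =>
      cases f₂ with
      | zero => simp at h2
      | succ g =>
        simp only [phasesAux]
        congr 1
        apply ih
        · simp only [List.length_drop]
          have : 1 ≤ max 1 (maxPrefixLen k (x :: xs)) := le_max_left _ _
          simp only [List.length_cons] at h1 ⊢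
          omega
        · simp only [List.length_drop]
          have : 1 ≤ max 1 (maxPrefixLen k (x :: xs)) := le_max_left _ _
          simp only [List.length_cons] at h2 ⊢
          omega

lemma phases_cons {α : Type*} [DecidableEq α] (k : ℕ) (r : List α) (hr : r ≠ []) :
    phases k r = r.take (max 1 (maxPrefixLen k r)) ::
      phases k (r.drop (max 1 (maxPrefixLen k r))) := by
  obtain ⟨x, xs, rfl⟩ := List.exists_cons_of_ne_nil hr
  show phasesAux k (x :: xs).length (x :: xs) = _
  rw [List.length_cons]
  simp only [phasesAux]
  congr 1
  apply phasesAux_congr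
  · have : 1 ≤ max 1 (maxPrefixLen k (x :: xs)) := le_max_left _ _
    simp only [List.length_drop, List.length_cons]
    omega
  · simp

def cutBlocks {α : Type*} : ℕ → List (List α) → List (List α)
  | _, [] => []
  | n, b :: bs =>
      if n = 0 then b :: bs
      else if n < b.length then b.drop n :: bs
      else cutBlocks (n - b.length) bs

lemma cutBlocks_flatten {α : Type*} : ∀ (blocks : List (List α)) (n : ℕ),
    (cutBlocks n blocks).flatten = blocks.flatten.drop n := by
  intro blocks
  induction blocks with
  | nil => intro n; simp [cutBlocks]
  | cons b bs ih =>
    intro n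
    by_cases h0 : n = 0
    · simp [cutBlocks, h0]
    · by_cases hlt : n < b.length
      · simp only [cutBlocks, h0, hlt, if_false, if_true, List.flatten_cons,
          List.drop_append]
        have : n - b.length = 0 := by omega
        simp [this]
      · simp only [cutBlocks, h0, hlt, if_false, List.flatten_cons,
          List.drop_append, ih]
        have : b.drop n = [] := by
          apply List.drop_eq_nil_of_le; omega
        simp [this]

lemma cutBlocks_mem {α : Type*} : ∀ (blocks : List (List α)) (n : ℕ) (b' : List α),
    b' ∈ cutBlocks n blocks → ∃ b ∈ blocks, b' <:+ b ∧ (b' = [] → b = []) := by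
  intro blocks
  induction blocks with
  | nil => intro n b' h; simp [cutBlocks] at h
  | cons b bs ih =>
    intro n b' h
    by_cases h0 : n = 0
    · simp only [cutBlocks, h0, if_true] at h
      rcases List.mem_cons.1 h with rfl | h
      · exact ⟨b', by simp, List.suffix_refl _, fun h => h⟩
      · exact ⟨b', by simp [h], List.suffix_refl _, fun h => h⟩
    · by_cases hlt : n < b.length
      · simp only [cutBlocks, h0, hlt, if_false, if_true] at h
        rcases List.mem_cons.1 h with rfl | h
        · refine ⟨b, by simp, List.drop_suffix _ _, fun hh => ?_⟩
          exfalso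
          have := List.length_drop (i := n) (l := b)
          rw [hh] at this
          simp at this
          omega
        · exact ⟨b', by simp [h], List.suffix_refl _, fun h => h⟩
      · simp only [cutBlocks, h0, hlt, if_false] at h
        obtain ⟨c, hc, hs⟩ := ih _ _ h
        exact ⟨c, by simp [hc], hs⟩

lemma cutBlocks_length {α : Type*} : ∀ (blocks : List (List α)) (n : ℕ),
    (cutBlocks n blocks).length ≤ blocks.length := by
  intro blocks
  induction blocks with
  | nil => intro n; simp [cutBlocks]
  | cons b bs ih =>
    intro n
    by_cases h0 : n = 0
    · simp [cutBlocks, h0]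
    · by_cases hlt : n < b.length
      · simp [cutBlocks, h0, hlt]
      · simp only [cutBlocks, h0, hlt, if_false, List.length_cons]
        exact le_trans (ih _) (by omega)

lemma cutBlocks_ends {α : Type*} : ∀ (blocks : List (List α)) (n : ℕ),
    n ≤ blocks.flatten.length →
    ∀ j' < (cutBlocks n blocks).length, ∃ j < blocks.length,
      ((blocks.take (j + 1)).map List.length).sum
        = n + (((cutBlocks n blocks).take (j' + 1)).map List.length).sum := by
  intro blocks
  induction blocks with
  | nil => intro n _ j' h; simp [cutBlocks] at h
  | cons b bs ih =>
    intro n hn j' hj'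
    by_cases h0 : n = 0
    · subst h0
      simp only [cutBlocks, if_true] at hj' ⊢
      exact ⟨j', hj', by simp⟩
    · by_cases hlt : n < b.length
      · simp only [cutBlocks, h0, hlt, if_false, if_true] at hj' ⊢
        refine ⟨j', by simpa using hj', ?_⟩
        cases j' with
        | zero => simp; omega
        | succ m =>
          simp only [List.take_succ_cons, List.map_cons, List.sum_cons, List.length_drop]
          omega
      · simp only [cutBlocks, h0, hlt, if_false] at hj' ⊢
        have hn' : n - b.length ≤ bs.flatten.length := by
          simp only [List.flatten_cons, List.length_append] at hn
          omega
        obtain ⟨j, hj, heq⟩ := ih (n - b.length) hn' j' hj'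
        refine ⟨j + 1, by simpa using Nat.succ_lt_succ hj, ?_⟩
        simp only [List.take_succ_cons, List.map_cons, List.sum_cons]
        omega

section
variable {α : Type*} [DecidableEq α]

lemma dedup_length_le_of_suffix {l₁ l₂ : List α} (h : l₁ <:+ l₂) :
    l₁.dedup.length ≤ l₂.dedup.length := by
  have hsub : l₁.dedup ⊆ l₂.dedup := by
    intro x hx
    rw [List.mem_dedup] at hx ⊢
    exact h.subset hx
  exact (List.nodup_dedup l₁).subperm hsub |>.length_le
end

lemma phases_main {α : Type*} [DecidableEq α] (k' : ℕ) :
    ∀ (N : ℕ) (r : List α) (blocks : List (List α)), r.length ≤ N →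
    blocks.flatten = r →
    (∀ b ∈ blocks, b ≠ []) →
    (∀ b ∈ blocks, b.dedup.length ≤ k') →
    (∀ p < (phases k' r).length, ∃ j < blocks.length,
        phaseStart k' r p < ((blocks.take (j + 1)).map List.length).sum ∧
        ((blocks.take (j + 1)).map List.length).sum ≤ phaseStart k' r (p + 1)) ∧
    (phases k' r).length ≤ blocks.length := by
  intro N
  induction N with
  | zero =>
    intro r blocks hN hjoin hne hdist
    rw [List.length_eq_zero_iff.1 (Nat.le_zero.1 hN)]
    constructor
    · intro p hp
      simp [phases, phasesAux] at hp
    · simp [phases, phasesAux]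
  | succ N ih =>
    intro r blocks hN hjoin hne hdist
    rcases eq_or_ne r [] with rfl | hr
    · constructor
      · intro p hp; simp [phases, phasesAux] at hp
      · simp [phases, phasesAux]
    -- r nonempty
    have hbne : blocks ≠ [] := by
      rintro rfl; exact hr (hjoin.symm)
    obtain ⟨b₀, bs, rfl⟩ := List.exists_cons_of_ne_nil hbne
    have hb₀ : b₀ ≠ [] := hne b₀ (by simp)
    set n := max 1 (maxPrefixLen k' r) with hn_def
    have htake : r.take b₀.length = b₀ := by
      rw [← hjoin, List.flatten_cons, List.take_left]
    have hb₀len : b₀.length ≤ n := by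
      refine le_trans (le_maxPrefixLen ?_ ?_) (le_max_right _ _)
      · rw [← hjoin, List.flatten_cons]; simp
      · rw [htake]; exact hdist b₀ (by simp)
    have h1n : 1 ≤ n := le_max_left _ _
    have hnr : n ≤ r.length :=
      max_le (List.length_pos_iff.2 hr) (maxPrefixLen_le _ _)
    set r' := r.drop n with hr'_def
    set blocks' := cutBlocks n (b₀ :: bs) with hblocks'_def
    have hjoin' : blocks'.flatten = r' := by
      rw [hblocks'_def, cutBlocks_flatten, hjoin]
    have hne' : ∀ b ∈ blocks', b ≠ [] := by
      intro b' hb'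
      obtain ⟨b, hb, _, himp⟩ := cutBlocks_mem _ _ _ hb'
      intro h
      exact hne b hb (himp h)
    have hdist' : ∀ b ∈ blocks', b.dedup.length ≤ k' := by
      intro b' hb'
      obtain ⟨b, hb, hsuf, _⟩ := cutBlocks_mem _ _ _ hb'
      exact le_trans (dedup_length_le_of_suffix hsuf) (hdist b hb)
    have hN' : r'.length ≤ N := by
      rw [hr'_def, List.length_drop]; omega
    obtain ⟨IH1, IH2⟩ := ih r' blocks' hN' hjoin' hne' hdist'
    have hphases : phases k' r = r.take n :: phases k' r' := phases_cons k' r hr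
    have hcutstep : blocks' = cutBlocks (n - b₀.length) bs := by
      rw [hblocks'_def, cutBlocks]
      have h0 : ¬ (n = 0) := by omega
      have hlt : ¬ (n < b₀.length) := by omega
      simp [h0, hlt]
    have hblen : blocks'.length ≤ bs.length := by
      rw [hcutstep]; exact cutBlocks_length _ _
    have hps : ∀ m, phaseStart k' r (m + 1) = n + phaseStart k' r' m := by
      intro m
      simp only [phaseStart, hphases, List.take_succ_cons, List.map_cons, List.sum_cons,
        List.length_take, min_eq_left hnr]
    constructor
    · intro p hp
      cases p with
      | zero =>
        refine ⟨0, by simp, ?_, ?_⟩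
        · simp only [phaseStart, List.take_zero, List.map_nil, List.sum_nil]
          simp only [List.take_succ_cons, List.take_zero, List.map_cons, List.map_nil,
            List.sum_cons, List.sum_nil]
          have := List.length_pos_iff.2 hb₀
          omega
        · rw [hps 0]
          simp only [List.take_succ_cons, List.take_zero, List.map_cons, List.map_nil,
            List.sum_cons, List.sum_nil]
          have : phaseStart k' r' 0 = 0 := by simp [phaseStart]
          omega
      | succ q =>
        have hq : q < (phases k' r').length := by
          rw [hphases] at hp
          simpa using hp
        obtain ⟨j', hj', hlo, hhi⟩ := IH1 q hq
        obtain ⟨j, hj, heq⟩ := cutBlocks_ends (b₀ :: bs) n (by rw [hjoin]; exact hnr) j' hj'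
        rw [← hblocks'_def] at heq
        refine ⟨j, hj, ?_, ?_⟩
        · rw [hps q, heq]; omega
        · rw [hps (q + 1), heq]; omega
    · rw [hphases]
      simp only [List.length_cons]
      omega

/-- if `r` is partitioned into consecutive nonempty blocks each
requesting at most `k'` distinct items, then every `k'`-phase contains the final
element of at least one block; hence there are at most as many `k'`-phases as
blocks. -/
theorem phases_le_blocks {α : Type*} [DecidableEq α] (k' : ℕ) (r : List α)
    (blocks : List (List α)) (hjoin : blocks.flatten = r)
    (hne : ∀ b ∈ blocks, b ≠ [])
    (hdist : ∀ b ∈ blocks, b.dedup.length ≤ k') :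
    (∀ p < (phases k' r).length, ∃ j < blocks.length,
        phaseStart k' r p < ((blocks.take (j + 1)).map List.length).sum ∧
        ((blocks.take (j + 1)).map List.length).sum ≤ phaseStart k' r (p + 1)) ∧
    (phases k' r).length ≤ blocks.length :=
  phases_main k' r.length r blocks le_rfl hjoin hne hdist
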